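/- SEP ≡_W WKL ≤_W EC ≡_W lim: the separation problem is continuously Weihrauch equivalent to weak Kőnig's lemma, which is continuously Weihrauch reducible to EC, and EC is continuously Weihrauch equivalent to the limit problem on Baire space. -/

import Mathlib

open Filter Topology

abbrev Baire : Type := ℕ → ℕ

/-- The pairing `⟨p,q⟩(2n) = p(n)`, `⟨p,q⟩(2n+1) = q(n)`. -/
def pairB (p q : Baire) : Baire := fun n => if n % 2 = 0 then p (n / 2) else q (n / 2)

/-- A problem: a partial multivalued function on Baire space. -/
structure Problem where
  dom : Set Baire
  sol : Baire → Set Baire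

/-- Continuous Weihrauch reducibility. -/
def WRed (f g : Problem) : Prop :=
  ∃ (Kd Hd : Set Baire) (K H : Baire → Baire),
    ContinuousOn K Kd ∧ ContinuousOn H Hd ∧
      ∀ p ∈ f.dom, p ∈ Kd ∧ K p ∈ g.dom ∧
        ∀ q ∈ g.sol (K p), pairB p q ∈ Hd ∧ H (pairB p q) ∈ f.sol p

/-- Strong continuous Weihrauch reducibility. -/
def SWRed (f g : Problem) : Prop :=
  ∃ (Kd Hd : Set Baire) (K H : Baire → Baire),
    ContinuousOn K Kd ∧ ContinuousOn H Hd ∧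
      ∀ p ∈ f.dom, p ∈ Kd ∧ K p ∈ g.dom ∧
        ∀ q ∈ g.sol (K p), q ∈ Hd ∧ H q ∈ f.sol p

def WEquiv (f g : Problem) : Prop := WRed f g ∧ WRed g f
def SWEquiv (f g : Problem) : Prop := SWRed f g ∧ SWRed g f
def WLt (f g : Problem) : Prop := WRed f g ∧ ¬ WRed g f

/-- `range(p-1)`. -/
def rangeM (p : Baire) : Set ℕ := {n | ∃ i, p i = n + 1}

/-- Characteristic function of a set of naturals. -/
noncomputable def chi (A : Set ℕ) : Baire := A.indicator fun _ => 1

noncomputable def EC : Problem where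
  dom := Set.univ
  sol := fun p => {chi (rangeM p)}

noncomputable def EC1 : Problem where
  dom := {p | ((rangeM p)ᶜ).encard ≤ 1}
  sol := fun p => {chi (rangeM p)}

def pfst (r : Baire) : Baire := fun n => r (2 * n)
def psnd (r : Baire) : Baire := fun n => r (2 * n + 1)

noncomputable def SEP : Problem where
  dom := {r | rangeM (pfst r) ∩ rangeM (psnd r) = ∅}
  sol := fun r =>
    {s | ∃ A : Set ℕ, s = chi A ∧ rangeM (pfst r) ⊆ A ∧ A ⊆ (rangeM (psnd r))ᶜ}

noncomputable def SEP1 : Problem where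
  dom := {r | rangeM (pfst r) ∩ rangeM (psnd r) = ∅ ∧
    ((rangeM (pfst r) ∪ rangeM (psnd r))ᶜ).encard ≤ 1}
  sol := SEP.sol

/- rationals -/
def ratEnum (i : ℕ) : ℚ :=
  ((i.unpair.1 : ℚ) - (i.unpair.2.unpair.1 : ℚ)) / ((i.unpair.2.unpair.2 : ℚ) + 1)

def rhoCauchy (p : Baire) (x : ℝ) : Prop :=
  ∀ n, |(ratEnum (p n) : ℝ) - x| ≤ (2 : ℝ) ^ (-(n : ℤ))

def rhoNaive (p : Baire) (x : ℝ) : Prop :=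
  Tendsto (fun n => ((ratEnum (p n) : ℝ))) atTop (nhds x)

def rhoLt (p : Baire) (x : ℝ) : Prop := rangeM p = {n | (ratEnum n : ℝ) < x}
def rhoGt (p : Baire) (x : ℝ) : Prop := rangeM p = {n | x < (ratEnum n : ℝ)}

def rhoCfLt (p : Baire) (x : ℝ) : Prop :=
  (∀ n, p n ≤ 1) ∧ ∀ n, (p n = 1 ↔ (ratEnum n : ℝ) < x)
def rhoCfGt (p : Baire) (x : ℝ) : Prop :=
  (∀ n, p n ≤ 1) ∧ ∀ n, (p n = 1 ↔ x < (ratEnum n : ℝ))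

noncomputable def cfTail : List ℕ → ℝ
  | [] => 0
  | b :: l => 1 / ((b : ℝ) + cfTail l)

noncomputable def cfApprox (p : Baire) (k : ℕ) : ℝ :=
  ((Denumerable.ofNat ℤ (p 0) : ℤ) : ℝ) + cfTail ((List.range k).map fun i => p (i + 1))

def rhoCf (p : Baire) (x : ℝ) : Prop :=
  ((∀ i, 1 ≤ i → 1 ≤ p i) ∧ Tendsto (cfApprox p) atTop (nhds x)) ∨
    (∃ k, 1 ≤ k ∧ p k = 0 ∧ (∀ i, 1 ≤ i → i < k → 1 ≤ p i) ∧
      (2 ≤ k → 2 ≤ p (k - 1)) ∧ x = cfApprox p (k - 1))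

def rhoDec (p : Baire) (x : ℝ) : Prop :=
  (∀ n, 1 ≤ n → p n ≤ 9) ∧
    x = ((Denumerable.ofNat ℤ (p 0) : ℤ) : ℝ) + ∑' n : ℕ, (p (n + 1) : ℝ) / 10 ^ (n + 1)

/-- The implication problem between two representations of ℝ. -/
def implProblem (d1 d2 : Baire → ℝ → Prop) : Problem where
  dom := {p | ∃ x, d1 p x}
  sol := fun p => {q | ∃ x, d1 p x ∧ d2 q x}

/- trees / WKL / choice on Cantor space -/
def wordCode : List Bool → ℕ
  | [] => 0
  | b :: w => 2 * wordCode w + (if b then 2 else 1)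

def prefixList (x : Baire) (k : ℕ) : List Bool := (List.range k).map fun i => decide (x i = 1)

def isTreeCode (t : Baire) : Prop :=
  (∀ n, t n ≤ 1) ∧
    ∀ w v : List Bool, w <+: v → t (wordCode v) = 1 → t (wordCode w) = 1

def WKL : Problem where
  dom := {t | isTreeCode t ∧ {w : List Bool | t (wordCode w) = 1}.Infinite}
  sol := fun t => {x | (∀ n, x n ≤ 1) ∧ ∀ k, t (wordCode (prefixList x k)) = 1}

def Ap (p : Baire) : Set Baire :=
  {x | (∀ n, x n ≤ 1) ∧ ∀ k, wordCode (prefixList x k) ∉ rangeM p}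

def CCantor : Problem where
  dom := {p | (Ap p).Nonempty}
  sol := Ap

def Cle2 : Problem where
  dom := {p | (Ap p).Nonempty ∧ (Ap p).encard ≤ 2}
  sol := Ap

/- limit and parallelization -/
def projCount (r : Baire) (n : ℕ) : Baire := fun k => r (Nat.pair n k)

def limP : Problem where
  dom := {r | ∃ q : Baire, ∀ k, Tendsto (fun n => projCount r n k) atTop (nhds (q k))}
  sol := fun r => {q | ∀ k, Tendsto (fun n => projCount r n k) atTop (nhds (q k))}

def parallel (f : Problem) : Problem where
  dom := {r | ∀ n, projCount r n ∈ f.dom}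
  sol := fun r => {s | ∀ n, projCount s n ∈ f.sol (projCount r n)}

def MCT : Problem where
  dom := {r | ∃ xs : ℕ → ℝ, (∀ n, rhoCauchy (projCount r n) (xs n)) ∧
    Monotone xs ∧ BddAbove (Set.range xs)}
  sol := fun r => {q | ∃ xs : ℕ → ℝ, (∀ n, rhoCauchy (projCount r n) (xs n)) ∧
    Monotone xs ∧ BddAbove (Set.range xs) ∧ rhoCauchy q (⨆ n, xs n)}

/- SORT and RAT -/
open Classical in
noncomputable def sortOut (p : Baire) : Baire := fun k =>
  if {i | p i = 0}.Infinite then 0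
  else if k < {i | p i = 0}.ncard then 0 else 1

noncomputable def SORT : Problem where
  dom := {p | ∀ n, p n ≤ 1}
  sol := fun p => {sortOut p}

def znk (n : ℕ) : Baire := fun k => if k < n then 0 else 1

def RAT : Problem where
  dom := {p | ∃ x, rhoCauchy p x}
  sol := fun p => {s | ∃ x, rhoCauchy p x ∧
    ((∃ n, x = (ratEnum n : ℝ) ∧ s = znk n) ∨
      ((∀ r : ℚ, x ≠ (r : ℝ)) ∧ s = fun _ => 0))}

/- omniscience principles -/
def projFin (m i : ℕ) (r : Baire) : Baire := fun k => r (m * k + i - 1)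
def isZeroSeq (p : Baire) : Prop := ∀ k, p k = 0
def constSeq (i : ℕ) : Baire := fun _ => i

noncomputable def LPOn (n : ℕ) : Problem where
  dom := Set.univ
  sol := fun r => {constSeq ({i | 1 ≤ i ∧ i ≤ n ∧ isZeroSeq (projFin n i r)}.ncard)}

def LLPOn (n : ℕ) : Problem where
  dom := {r | {i | 1 ≤ i ∧ i ≤ n ∧ ¬ isZeroSeq (projFin n i r)}.encard ≤ 1}
  sol := fun r => {s | ∃ i, 1 ≤ i ∧ i ≤ n ∧ isZeroSeq (projFin n i r) ∧ s = constSeq i}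

def MLPOn (n : ℕ) : Problem where
  dom := {r | ∃ i, 1 ≤ i ∧ i ≤ n ∧ isZeroSeq (projFin n i r)}
  sol := fun r => {s | ∃ i, 1 ≤ i ∧ i ≤ n ∧ isZeroSeq (projFin n i r) ∧ s = constSeq i}

def LPO : Problem where
  dom := Set.univ
  sol := fun p => {s | (isZeroSeq p ∧ s = constSeq 1) ∨ (¬ isZeroSeq p ∧ s = constSeq 0)}

/- choice problems on ℕ etc. -/
def Cfin (n : ℕ) : Problem where
  dom := {p | ∃ i, i < n ∧ i ∉ rangeM p}
  sol := fun p => {s | ∃ i, i < n ∧ i ∉ rangeM p ∧ s = constSeq i}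

def ACCfin (n : ℕ) : Problem where
  dom := {p | (∃ i, i < n ∧ i ∉ rangeM p) ∧ ({i | i < n} ∩ rangeM p).encard ≤ 1}
  sol := (Cfin n).sol

def CNat : Problem where
  dom := {p | ∃ i, i ∉ rangeM p}
  sol := fun p => {s | ∃ i, i ∉ rangeM p ∧ s = constSeq i}

/- differentiation -/
instance : Countable (AddMonoidAlgebra ℚ ℕ) :=
  AddMonoidAlgebra.coeff_injective.countable

instance : Countable (Polynomial ℚ) :=
  Polynomial.toFinsupp_injective.countable

noncomputable def polyEnum : ℕ → Polynomial ℚ :=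
  (exists_surjective_nat (Polynomial ℚ)).choose

noncomputable def polyFun (k : ℕ) : C(Set.Icc (0:ℝ) 1, ℝ) :=
  ⟨fun x => ((polyEnum k).map (algebraMap ℚ ℝ)).eval (x : ℝ),
   (((polyEnum k).map (algebraMap ℚ ℝ)).continuous).comp continuous_subtype_val⟩

noncomputable def deltaC (p : Baire) (f : C(Set.Icc (0:ℝ) 1, ℝ)) : Prop :=
  ∀ n, ‖f - polyFun (p n)‖ ≤ (2 : ℝ) ^ (-(n : ℤ))

def IsDerivOn (f g : C(Set.Icc (0:ℝ) 1, ℝ)) : Prop :=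
  ∀ x : Set.Icc (0:ℝ) 1,
    HasDerivWithinAt (Set.IccExtend (by norm_num : (0:ℝ) ≤ 1) f) (g x) (Set.Icc 0 1) (x : ℝ)

noncomputable def diffP : Problem where
  dom := {p | ∃ f g, deltaC p f ∧ IsDerivOn f g}
  sol := fun p => {q | ∃ f g, deltaC p f ∧ IsDerivOn f g ∧ deltaC q g}

/- ========= Auxiliary infrastructure ========= -/
section AuxWeihrauch

open Classical

/-- Continuity on a set from local finitary dependence of each output coordinate. -/
lemma baire_continuousOn {H : Baire → Baire} {D : Set Baire}
    (h : ∀ s ∈ D, ∀ k, ∃ N, ∀ t ∈ D, (∀ i, i < N → t i = s i) → H t k = H s k) :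
    ContinuousOn H D := by
  intro s hs
  have : Tendsto H (nhdsWithin s D) (nhds (H s)) := by
    rw [tendsto_pi_nhds]
    intro k
    obtain ⟨N, hN⟩ := h s hs k
    have hUopen : IsOpen {t : Baire | ∀ i, i < N → t i = s i} := by
      have : {t : Baire | ∀ i, i < N → t i = s i}
          = ⋂ i ∈ Finset.range N, (fun t : Baire => t i) ⁻¹' {s i} := by
        ext t; simp [Finset.mem_range]
      rw [this]
      exact isOpen_biInter_finset fun i _ => (continuous_apply i).isOpen_preimage _ (isOpen_discrete _)
    have hU : {t : Baire | ∀ i, i < N → t i = s i} ∈ nhds s :=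
      hUopen.mem_nhds (fun i _ => rfl)
    have hev : ∀ᶠ t in nhdsWithin s D, H t k = H s k := by
      filter_upwards [nhdsWithin_le_nhds hU, self_mem_nhdsWithin] with t h1 h2
      exact hN t h2 h1
    exact Tendsto.congr' (hev.mono fun t ht => ht.symm) tendsto_const_nhds
  exact this

lemma chi_apply (A : Set ℕ) (n : ℕ) : chi A n = if n ∈ A then 1 else 0 := by
  simp [chi, Set.indicator_apply]

lemma chi_le_one (A : Set ℕ) (n : ℕ) : chi A n ≤ 1 := by
  rw [chi_apply]; split <;> simp

lemma chi_eq_one_iff {A : Set ℕ} {n : ℕ} : chi A n = 1 ↔ n ∈ A := by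
  rw [chi_apply]; split <;> simp_all

lemma chi_eq_zero_iff {A : Set ℕ} {n : ℕ} : chi A n = 0 ↔ n ∉ A := by
  rw [chi_apply]; split <;> simp_all

lemma pfst_pairB (p q : Baire) : pfst (pairB p q) = p := by
  funext n
  simp only [pfst, pairB]
  rw [if_pos (by omega)]
  congr 1; omega

lemma psnd_pairB (p q : Baire) : psnd (pairB p q) = q := by
  funext n
  simp only [psnd, pairB]
  rw [if_neg (by omega)]
  congr 1; omega

lemma mem_rangeM {p : Baire} {n : ℕ} : n ∈ rangeM p ↔ ∃ i, p i = n + 1 := Iff.rfl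

/-- Enumeration of `{m | ∃ k, c m k}`. -/
noncomputable def condEnum (c : ℕ → ℕ → Prop) : Baire :=
  fun j => if c j.unpair.1 j.unpair.2 then j.unpair.1 + 1 else 0

lemma rangeM_condEnum (c : ℕ → ℕ → Prop) : rangeM (condEnum c) = {m | ∃ k, c m k} := by
  ext m
  constructor
  · rintro ⟨i, hi⟩
    unfold condEnum at hi
    split at hi
    · rename_i h
      have hm : i.unpair.1 = m := by omega
      exact ⟨i.unpair.2, hm ▸ h⟩
    · omega
  · rintro ⟨k, hk⟩
    exact ⟨Nat.pair m k, by simp [condEnum, Nat.unpair_pair, hk]⟩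

end AuxWeihrauch
section AuxTrees

open Classical

/-- Inverse of `wordCode`. -/
def decodeW : ℕ → List Bool
  | 0 => []
  | n + 1 =>
    (if n % 2 = 1 then true else false) :: decodeW ((if n % 2 = 1 then n - 1 else n) / 2)
  decreasing_by simp_wf; split <;> omega

lemma decodeW_wordCode (w : List Bool) : decodeW (wordCode w) = w := by
  induction w with
  | nil => simp [wordCode, decodeW]
  | cons b w ih =>
    cases b with
    | true =>
      have h : wordCode (true :: w) = (2 * wordCode w + 1) + 1 := by simp [wordCode]
      rw [h, decodeW]
      have h1 : (2 * wordCode w + 1) % 2 = 1 := by omega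
      simp only [h1, if_pos, if_true]
      have h2 : (2 * wordCode w + 1 - 1) / 2 = wordCode w := by omega
      simp only [h2, ih]
    | false =>
      have h : wordCode (false :: w) = (2 * wordCode w) + 1 := by simp [wordCode]
      rw [h, decodeW]
      have h1 : ¬ ((2 * wordCode w) % 2 = 1) := by omega
      simp only [h1, if_neg, if_false]
      have h2 : (2 * wordCode w) / 2 = wordCode w := by omega
      simp only [h2, ih]

lemma wordCode_injective : Function.Injective wordCode := by
  intro a b h
  rw [← decodeW_wordCode a, h, decodeW_wordCode]

lemma length_le_wordCode (w : List Bool) : w.length ≤ wordCode w := by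
  induction w with
  | nil => simp [wordCode]
  | cons b w ih => simp only [wordCode, List.length_cons]; split <;> omega

lemma wordCode_le (w : List Bool) : wordCode w ≤ 2 ^ (w.length + 1) - 2 := by
  induction w with
  | nil => simp [wordCode]
  | cons b w ih =>
    have h2 : (2:ℕ) ≤ 2 ^ (w.length + 1) := Nat.one_lt_two_pow_iff.mpr (by omega)
    simp only [wordCode, List.length_cons]
    have : (2:ℕ) ^ (w.length + 1 + 1) = 2 * 2 ^ (w.length + 1) := by ring
    rw [this]
    split <;> omega

lemma finite_short_words (k : ℕ) : {w : List Bool | w.length < k}.Finite := by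
  have hsub : {w : List Bool | w.length < k} ⊆ wordCode ⁻¹' (Set.Iio (2 ^ (k + 1))) := by
    intro w hw
    have h1 := wordCode_le w
    have h2 : (2:ℕ) ^ (w.length + 1) ≤ 2 ^ (k + 1) :=
      Nat.pow_le_pow_right (by omega) (by simpa using Nat.le_of_lt hw)
    simp only [Set.mem_preimage, Set.mem_Iio]
    have : (0:ℕ) < 2 ^ (k+1) := Nat.pow_pos (by omega)
    omega
  exact Set.Finite.subset ((Set.finite_Iio _).preimage (wordCode_injective.injOn)) hsub

/-- `w` has no extensions of length `k` in the tree coded by `t`. -/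
def diesAt (t : Baire) (w : List Bool) (k : ℕ) : Prop :=
  ∀ u : List Bool, u.length = k → t (wordCode (w ++ u)) = 0

/-- `w` has extensions of every length in the tree coded by `t`. -/
def aliveF (t : Baire) (w : List Bool) : Prop :=
  ∀ k, ∃ u : List Bool, u.length = k ∧ t (wordCode (w ++ u)) = 1

lemma not_aliveF_iff {t : Baire} (ht : ∀ n, t n ≤ 1) (w : List Bool) :
    ¬ aliveF t w ↔ ∃ k, diesAt t w k := by
  unfold aliveF diesAt
  push_neg
  constructor
  · rintro ⟨k, hk⟩
    exact ⟨k, fun u hu => by have := hk u; have := ht (wordCode (w ++ u)); omega⟩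
  · rintro ⟨k, hk⟩
    exact ⟨k, fun u hu => by have := hk u; omega⟩

lemma diesAt_mono {t : Baire} (ht : isTreeCode t) {w : List Bool} {k k' : ℕ}
    (h : diesAt t w k) (hk : k ≤ k') : diesAt t w k' := by
  intro u hu
  have htake : (u.take k).length = k := by simp [List.length_take]; omega
  have h0 := h (u.take k) htake
  have hpre : w ++ u.take k <+: w ++ u := by
    obtain ⟨tl, htl⟩ := List.take_prefix k u
    exact ⟨tl, by rw [List.append_assoc, htl]⟩
  have hle := ht.1 (wordCode (w ++ u))
  by_contra hne
  have h1 : t (wordCode (w ++ u)) = 1 := by omega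
  have := ht.2 _ _ hpre h1
  omega

lemma aliveF_mem {t : Baire} (h : aliveF t w) : t (wordCode w) = 1 := by
  obtain ⟨u, hu, hm⟩ := h 0
  rw [List.length_eq_zero_iff] at hu
  simpa [hu] using hm

lemma aliveF_child {t : Baire} (ht : isTreeCode t) {w : List Bool} (h : aliveF t w) :
    aliveF t (w ++ [false]) ∨ aliveF t (w ++ [true]) := by
  by_contra hc
  push_neg at hc
  obtain ⟨h0, h1⟩ := hc
  rw [not_aliveF_iff ht.1] at h0 h1
  obtain ⟨k0, hk0⟩ := h0
  obtain ⟨k1, hk1⟩ := h1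
  obtain ⟨u, hu, hmem⟩ := h (max k0 k1 + 1)
  match u, hu with
  | b :: u', hu =>
    have hlen : u'.length = max k0 k1 := by simpa using hu
    have heq : w ++ (b :: u') = (w ++ [b]) ++ u' := by simp
    rw [heq] at hmem
    cases b with
    | false =>
      have := diesAt_mono ht hk0 (show k0 ≤ u'.length by omega) u' rfl
      omega
    | true =>
      have := diesAt_mono ht hk1 (show k1 ≤ u'.length by omega) u' rfl
      omega

lemma aliveF_nil {t : Baire} (ht : isTreeCode t)
    (hinf : {w : List Bool | t (wordCode w) = 1}.Infinite) : aliveF t [] := by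
  intro k
  have : ∃ v : List Bool, t (wordCode v) = 1 ∧ k ≤ v.length := by
    by_contra hcon
    push_neg at hcon
    exact hinf (Set.Finite.subset (finite_short_words k) (fun v hv => hcon v hv))
  obtain ⟨v, hv, hk⟩ := this
  refine ⟨v.take k, by simp [List.length_take]; omega, ?_⟩
  have hpre : v.take k <+: v := List.take_prefix k v
  have := ht.2 _ _ hpre hv
  simpa using this

end AuxTrees
section AuxPath

/-- Greedy path generator. -/
def pathGen (f : List Bool → Baire → Bool) (q : Baire) : ℕ → List Bool
  | 0 => []
  | n + 1 => pathGen f q n ++ [f (pathGen f q n) q]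

lemma pathGen_length (f : List Bool → Baire → Bool) (q : Baire) (n : ℕ) :
    (pathGen f q n).length = n := by
  induction n with
  | zero => rfl
  | succ n ih => simp [pathGen, ih]

def pathOut (f : List Bool → Baire → Bool) (q : Baire) : Baire :=
  fun n => cond (f (pathGen f q n) q) 1 0

lemma pathOut_le_one (f : List Bool → Baire → Bool) (q : Baire) (n : ℕ) :
    pathOut f q n ≤ 1 := by
  unfold pathOut; cases f (pathGen f q n) q <;> simp

lemma prefixList_pathOut (f : List Bool → Baire → Bool) (q : Baire) (k : ℕ) :
    prefixList (pathOut f q) k = pathGen f q k := by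
  induction k with
  | zero => simp [prefixList, pathGen]
  | succ k ih =>
    unfold prefixList at ih ⊢
    rw [List.range_succ, List.map_append, ih]
    simp only [List.map_cons, List.map_nil, pathGen]
    congr 1
    unfold pathOut
    cases f (pathGen f q k) q <;> simp

lemma pathGen_invariant {f : List Bool → Baire → Bool} {q : Baire} (P : List Bool → Prop)
    (h0 : P []) (hstep : ∀ w, P w → P (w ++ [f w q])) : ∀ n, P (pathGen f q n) := by
  intro n
  induction n with
  | zero => exact h0
  | succ n ih => exact hstep _ ih

lemma pathGen_congr {f : List Bool → Baire → Bool} {M : ℕ → ℕ}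
    (hf : ∀ (w : List Bool) (q q' : Baire), (∀ i, i ≤ M w.length → q i = q' i) → f w q = f w q')
    {q q' : Baire} :
    ∀ k, (∀ i, i ≤ (Finset.range k).sup M → q i = q' i) → pathGen f q k = pathGen f q' k := by
  intro k
  induction k with
  | zero => intro _; rfl
  | succ k ih =>
    intro h
    have hmono : (Finset.range k).sup M ≤ (Finset.range (k+1)).sup M :=
      Finset.sup_mono (Finset.range_subset_range.mpr (by omega))
    have e := ih (fun i hi => h i (le_trans hi hmono))
    have hMk : M k ≤ (Finset.range (k+1)).sup M :=
      Finset.le_sup (Finset.mem_range.mpr (by omega))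
    have hfe : f (pathGen f q' k) q = f (pathGen f q' k) q' := by
      apply hf
      intro i hi
      exact h i (le_trans (by rwa [pathGen_length] at hi) hMk)
    simp only [pathGen, e, hfe]

lemma pathOut_congr {f : List Bool → Baire → Bool} {M : ℕ → ℕ}
    (hf : ∀ (w : List Bool) (q q' : Baire), (∀ i, i ≤ M w.length → q i = q' i) → f w q = f w q')
    {q q' : Baire} (n : ℕ)
    (h : ∀ i, i ≤ (Finset.range (n+1)).sup M → q i = q' i) :
    pathOut f q n = pathOut f q' n := by
  have hmono : (Finset.range n).sup M ≤ (Finset.range (n+1)).sup M :=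
    Finset.sup_mono (Finset.range_subset_range.mpr (by omega))
  have e := pathGen_congr hf n (fun i hi => h i (le_trans hi hmono))
  have hMk : M n ≤ (Finset.range (n+1)).sup M :=
    Finset.le_sup (Finset.mem_range.mpr (by omega))
  unfold pathOut
  rw [e]
  have : f (pathGen f q' n) q = f (pathGen f q' n) q' := by
    apply hf
    intro i hi
    exact h i (le_trans (by rwa [pathGen_length] at hi) hMk)
  rw [this]

end AuxPath
section RedECLim

open Classical

noncomputable def KECtoLim (p : Baire) : Baire :=
  fun j => if ∃ i, i < j.unpair.1 ∧ p i = j.unpair.2 + 1 then 1 else 0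

lemma wred_EC_limP : WRed EC limP := by
  refine ⟨Set.univ, Set.univ, KECtoLim, psnd, ?_, ?_, ?_⟩
  · -- continuity of K
    apply baire_continuousOn
    intro s _ j
    refine ⟨j.unpair.1, fun t _ h => ?_⟩
    unfold KECtoLim
    have : (∃ i, i < j.unpair.1 ∧ t i = j.unpair.2 + 1) ↔
        (∃ i, i < j.unpair.1 ∧ s i = j.unpair.2 + 1) := by
      constructor <;> rintro ⟨i, h1, h2⟩ <;> exact ⟨i, h1, by rw [h i h1] at *; exact h2⟩
    exact if_congr this rfl rfl
  · -- continuity of psnd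
    apply baire_continuousOn
    intro s _ k
    exact ⟨2 * k + 2, fun t _ h => h (2 * k + 1) (by omega)⟩
  · intro p _
    have key : ∀ k, Tendsto (fun n => projCount (KECtoLim p) n k) atTop
        (nhds (chi (rangeM p) k)) := by
      intro k
      have hval : ∀ n, projCount (KECtoLim p) n k
          = if ∃ i, i < n ∧ p i = k + 1 then 1 else 0 := by
        intro n; simp [projCount, KECtoLim, Nat.unpair_pair]
      by_cases hk : k ∈ rangeM p
      · obtain ⟨i, hi⟩ := hk
        apply tendsto_atTop_of_eventually_const (i₀ := i + 1)
        intro n hn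
        rw [hval n, if_pos ⟨i, by omega, hi⟩, chi_apply, if_pos ⟨i, hi⟩]
      · apply tendsto_atTop_of_eventually_const (i₀ := 0)
        intro n _
        rw [hval n, if_neg (fun ⟨i, _, hi⟩ => hk ⟨i, hi⟩), chi_apply, if_neg hk]
    refine ⟨trivial, ⟨chi (rangeM p), key⟩, ?_⟩
    intro q hq
    have : q = chi (rangeM p) := by
      funext k
      exact tendsto_nhds_unique (hq k) (key k)
    refine ⟨trivial, ?_⟩
    rw [psnd_pairB, this]
    rfl

noncomputable def KLimToEC (r : Baire) : Baire :=
  condEnum (fun j i => j.unpair.2 < i ∧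
    r (Nat.pair i j.unpair.1) ≠ r (Nat.pair j.unpair.2 j.unpair.1))

noncomputable def HLimToEC (s : Baire) : Baire :=
  fun k => if h : ∃ n, psnd s (Nat.pair k n) = 0 then pfst s (Nat.pair (Nat.find h) k) else 0

lemma wred_limP_EC : WRed limP EC := by
  refine ⟨Set.univ, {s | ∀ k, ∃ n, psnd s (Nat.pair k n) = 0}, KLimToEC, HLimToEC,
    ?_, ?_, ?_⟩
  · apply baire_continuousOn
    intro s _ j
    refine ⟨max (Nat.pair j.unpair.1.unpair.2 j.unpair.1.unpair.1)
      (Nat.pair j.unpair.2 j.unpair.1.unpair.1) + 1, fun t _ h => ?_⟩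
    have m1 := le_max_left (Nat.pair j.unpair.1.unpair.2 j.unpair.1.unpair.1)
      (Nat.pair j.unpair.2 j.unpair.1.unpair.1)
    have m2 := le_max_right (Nat.pair j.unpair.1.unpair.2 j.unpair.1.unpair.1)
      (Nat.pair j.unpair.2 j.unpair.1.unpair.1)
    have e1 : t (Nat.pair j.unpair.2 j.unpair.1.unpair.1)
        = s (Nat.pair j.unpair.2 j.unpair.1.unpair.1) := h _ (by omega)
    have e2 : t (Nat.pair j.unpair.1.unpair.2 j.unpair.1.unpair.1)
        = s (Nat.pair j.unpair.1.unpair.2 j.unpair.1.unpair.1) := h _ (by omega)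
    unfold KLimToEC condEnum
    simp only [e1, e2]
    by_cases hc : (Nat.unpair (Nat.unpair j).1).2 < (Nat.unpair j).2 ∧
        s (Nat.pair (Nat.unpair j).2 (Nat.unpair (Nat.unpair j).1).1) ≠
          s (Nat.pair (Nat.unpair (Nat.unpair j).1).2 (Nat.unpair (Nat.unpair j).1).1)
    · rw [if_pos hc, if_pos hc]
    · rw [if_neg hc, if_neg hc]
  · apply baire_continuousOn
    intro s hs k
    obtain h0 := hs k
    set n₀ := Nat.find h0 with hn₀
    refine ⟨(Finset.range (n₀ + 1)).sup (fun n => 2 * Nat.pair k n + 2)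
      + (2 * Nat.pair n₀ k + 1), fun t ht hagree => ?_⟩
    have hpsnd : ∀ n, n ≤ n₀ → psnd t (Nat.pair k n) = psnd s (Nat.pair k n) := by
      intro n hn
      show t (2 * Nat.pair k n + 1) = s (2 * Nat.pair k n + 1)
      apply hagree
      have hmem : n ∈ Finset.range (n₀ + 1) := Finset.mem_range.mpr (by omega)
      have h2 : 2 * Nat.pair k n + 2 ≤ (Finset.range (n₀ + 1)).sup (fun n => 2 * Nat.pair k n + 2) :=
        Finset.le_sup (f := fun n => 2 * Nat.pair k n + 2) hmem
      omega
    have ht0 : ∃ n, psnd t (Nat.pair k n) = 0 := ht k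
    have hfind : Nat.find ht0 = n₀ := by
      rw [Nat.find_eq_iff]
      constructor
      · rw [hpsnd n₀ le_rfl]; exact Nat.find_spec h0
      · intro n hn hcon
        exact Nat.find_min h0 hn (by rwa [hpsnd n (by omega)] at hcon)
    unfold HLimToEC
    rw [dif_pos ht0, dif_pos h0, hfind, ← hn₀]
    show t (2 * Nat.pair n₀ k) = s (2 * Nat.pair n₀ k)
    apply hagree
    omega
  · intro r hr
    obtain ⟨q, hq⟩ := hr
    refine ⟨trivial, trivial, ?_⟩
    intro y hy
    have hy' : y = chi (rangeM (KLimToEC r)) := hy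
    have hA : rangeM (KLimToEC r) = {j | ∃ i, j.unpair.2 < i ∧
        r (Nat.pair i j.unpair.1) ≠ r (Nat.pair j.unpair.2 j.unpair.1)} :=
      rangeM_condEnum _
    -- stabilization times exist
    have hstab : ∀ k, ∃ n, psnd (pairB r y) (Nat.pair k n) = 0 := by
      intro k
      have := hq k
      rw [nhds_discrete] at this
      rw [tendsto_pure] at this
      obtain ⟨N, hN⟩ := eventually_atTop.mp this
      refine ⟨N, ?_⟩
      rw [psnd_pairB, hy', chi_eq_zero_iff, hA]
      simp only [Set.mem_setOf_eq, Nat.unpair_pair, not_exists]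
      rintro i ⟨hi, hne⟩
      exact hne ((hN i (by omega)).trans (hN N le_rfl).symm)
    refine ⟨hstab, ?_⟩
    intro k
    have h0 : ∃ n, psnd (pairB r y) (Nat.pair k n) = 0 := hstab k
    have hval : HLimToEC (pairB r y) k = r (Nat.pair (Nat.find h0) k) :=
      (dif_pos h0).trans (congrFun (pfst_pairB r y) _)
    set n₀ := Nat.find h0 with hn0def
    have hspec : psnd (pairB r y) (Nat.pair k n₀) = 0 := Nat.find_spec h0
    have hy0 : y (Nat.pair k n₀) = 0 :=
      (congrFun (psnd_pairB r y) (Nat.pair k n₀)).symm.trans hspec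
    have hchi0 : chi (rangeM (KLimToEC r)) (Nat.pair k n₀) = 0 :=
      (congrFun hy' (Nat.pair k n₀)).symm.trans hy0
    have hnotin : Nat.pair k n₀ ∉ rangeM (KLimToEC r) := chi_eq_zero_iff.mp hchi0
    rw [hA] at hnotin
    simp only [Set.mem_setOf_eq, Nat.unpair_pair, not_exists] at hnotin
    rw [hval]
    apply tendsto_atTop_of_eventually_const (i₀ := n₀)
    intro n hn
    show r (Nat.pair n k) = r (Nat.pair n₀ k)
    rcases Nat.eq_or_lt_of_le hn with h | h
    · rw [h]
    · by_contra hne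
      exact hnotin n ⟨h, hne⟩

end RedECLim
section RedWKLEC

open Classical

lemma length_decodeW_le (n : ℕ) : (decodeW n).length ≤ n := by
  induction n using Nat.strong_induction_on with
  | _ n ih =>
    match n with
    | 0 => simp [decodeW]
    | n + 1 =>
      rw [decodeW]
      have harg : (if n % 2 = 1 then n - 1 else n) / 2 < n + 1 := by split <;> omega
      have := ih _ harg
      simp only [List.length_cons]
      omega

lemma two_pow_gap (a : ℕ) : 2 ^ (a + 1) - 2 < 2 ^ (a + 2) ∧ 2 ≤ 2 ^ (a + 1) := by
  have h1 : (2:ℕ) ≤ 2 ^ (a + 1) := Nat.one_lt_two_pow_iff.mpr (by omega)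
  have h2 : (2:ℕ) ^ (a + 2) = 2 * 2 ^ (a + 1) := by ring
  omega

lemma diesAt_congr {t s : Baire} {w : List Bool} {k : ℕ}
    (h : ∀ i, i < 2 ^ (w.length + k + 2) → t i = s i) :
    diesAt t w k ↔ diesAt s w k := by
  have key : ∀ u : List Bool, u.length = k →
      t (wordCode (w ++ u)) = s (wordCode (w ++ u)) := by
    intro u hu
    apply h
    have h1 := wordCode_le (w ++ u)
    rw [List.length_append, hu] at h1
    have h2 := two_pow_gap (w.length + k)
    omega
  constructor <;> intro hd u hu
  · rw [← key u hu]; exact hd u hu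
  · rw [key u hu]; exact hd u hu

lemma aliveF_not_diesAt {t : Baire} {w : List Bool} (h : aliveF t w) (k : ℕ) :
    ¬ diesAt t w k := by
  intro hd
  obtain ⟨u, hu, hm⟩ := h k
  have := hd u hu
  omega

/-- forward functional for `WKL ≤ EC`. -/
noncomputable def KWKLtoEC (t : Baire) : Baire :=
  condEnum (fun m k => diesAt t (decodeW m) k)

def fEC : List Bool → Baire → Bool := fun w q => decide (q (wordCode (w ++ [false])) ≠ 0)

lemma fEC_congr : ∀ (w : List Bool) (q q' : Baire),
    (∀ i, i ≤ 2 ^ (w.length + 2) → q i = q' i) → fEC w q = fEC w q' := by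
  intro w q q' h
  unfold fEC
  have h1 := wordCode_le (w ++ [false])
  have hl : (w ++ [false]).length = w.length + 1 := by simp
  rw [hl, show w.length + 1 + 1 = w.length + 2 from rfl] at h1
  have h2 := two_pow_gap (w.length + 1)
  rw [show w.length + 1 + 1 = w.length + 2 from rfl] at h2
  rw [h _ (by omega)]

noncomputable def HWKLfromChi (r : Baire) : Baire := pathOut fEC (psnd r)

lemma HWKLfromChi_continuousOn (D : Set Baire) : ContinuousOn HWKLfromChi D := by
  apply baire_continuousOn
  intro s _ n
  refine ⟨2 * ((Finset.range (n + 1)).sup (fun m => 2 ^ (m + 2))) + 2, fun r _ h => ?_⟩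
  unfold HWKLfromChi
  apply pathOut_congr (M := fun n => 2 ^ (n + 2)) fEC_congr
  intro i hi
  show r (2 * i + 1) = s (2 * i + 1)
  apply h
  omega

lemma wred_WKL_EC : WRed WKL EC := by
  refine ⟨Set.univ, Set.univ, KWKLtoEC, HWKLfromChi, ?_, HWKLfromChi_continuousOn _, ?_⟩
  · apply baire_continuousOn
    intro s _ j
    refine ⟨2 ^ ((decodeW j.unpair.1).length + j.unpair.2 + 2), fun t _ h => ?_⟩
    unfold KWKLtoEC condEnum
    have hiff := diesAt_congr (t := t) (s := s) (w := decodeW j.unpair.1) (k := j.unpair.2) h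
    by_cases hc : diesAt s (decodeW j.unpair.1) j.unpair.2
    · rw [if_pos (hiff.mpr hc), if_pos hc]
    · rw [if_neg (fun hh => hc (hiff.mp hh)), if_neg hc]
  · rintro t ⟨ht, hinf⟩
    refine ⟨trivial, trivial, ?_⟩
    intro q hq
    have hq' : q = chi (rangeM (KWKLtoEC t)) := hq
    have hB : ∀ w : List Bool, (q (wordCode w) ≠ 0 ↔ ¬ aliveF t w) := by
      intro w
      rw [hq']
      have hr : rangeM (KWKLtoEC t) = {m | ∃ k, diesAt t (decodeW m) k} := rangeM_condEnum _
      rw [not_aliveF_iff ht.1]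
      constructor
      · intro hne
        have : wordCode w ∈ rangeM (KWKLtoEC t) := by
          by_contra hnot
          exact hne (chi_eq_zero_iff.mpr hnot)
        rw [hr] at this
        simpa [decodeW_wordCode] using this
      · intro hdies
        have : wordCode w ∈ rangeM (KWKLtoEC t) := by
          rw [hr]; simpa [decodeW_wordCode] using hdies
        rw [chi_eq_one_iff.mpr this]
        omega
    have hinv : ∀ n, aliveF t (pathGen fEC q n) := by
      apply pathGen_invariant (aliveF t) (aliveF_nil ht hinf)
      intro w hw
      by_cases h0 : aliveF t (w ++ [false])
      · have : fEC w q = false := by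
          unfold fEC
          simp only [decide_eq_false_iff_not, not_not]
          by_contra hne
          exact (hB (w ++ [false])).mp hne h0
        rw [this]; exact h0
      · have h1 : aliveF t (w ++ [true]) := (aliveF_child ht hw).resolve_left h0
        have : fEC w q = true := by
          unfold fEC
          simp only [decide_eq_true_eq]
          exact (hB (w ++ [false])).mpr h0
        rw [this]; exact h1
    refine ⟨trivial, ?_, ?_⟩
    · intro n
      have : HWKLfromChi (pairB t q) n = pathOut fEC q n := by
        unfold HWKLfromChi; rw [psnd_pairB]
      rw [this]; exact pathOut_le_one _ _ _
    · intro k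
      have he : HWKLfromChi (pairB t q) = pathOut fEC q := by
        unfold HWKLfromChi; rw [psnd_pairB]
      rw [he, prefixList_pathOut]
      exact aliveF_mem (hinv k)

end RedWKLEC
section RedSEPWKL

open Classical

lemma psnd_continuousOn (D : Set Baire) : ContinuousOn psnd D := by
  apply baire_continuousOn
  intro s _ k
  exact ⟨2 * k + 2, fun t _ h => h (2 * k + 1) (by omega)⟩

lemma prefixList_length (x : Baire) (k : ℕ) : (prefixList x k).length = k := by
  simp [prefixList]

lemma prefixList_getD (x : Baire) (k j : ℕ) (h : j < k) :
    (prefixList x k).getD j false = decide (x j = 1) := by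
  unfold prefixList
  rw [List.getD_eq_getElem _ _ (by simpa using h)]
  simp

def sepCond (r : Baire) (w : List Bool) : Prop :=
  ∀ j, j < w.length → ∀ i, i < w.length →
    (pfst r i = j + 1 → w.getD j false = true) ∧ (psnd r i = j + 1 → w.getD j false = false)

lemma sepCond_mono {t s : Baire} {w : List Bool}
    (h : ∀ i, i < 2 * w.length → t i = s i) (hc : sepCond t w) : sepCond s w := by
  intro j hj i hi
  refine ⟨fun hp => (hc j hj i hi).1 ?_, fun hp => (hc j hj i hi).2 ?_⟩
  · show t (2 * i) = j + 1
    rw [h (2 * i) (by omega)]; exact hp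
  · show t (2 * i + 1) = j + 1
    rw [h (2 * i + 1) (by omega)]; exact hp

noncomputable def KSEPtoWKL (r : Baire) : Baire :=
  fun m => if sepCond r (decodeW m) then 1 else 0

lemma KSEPtoWKL_one_iff (r : Baire) (w : List Bool) :
    KSEPtoWKL r (wordCode w) = 1 ↔ sepCond r w := by
  unfold KSEPtoWKL
  rw [decodeW_wordCode]
  split <;> simp_all

lemma wred_SEP_WKL : WRed SEP WKL := by
  refine ⟨Set.univ, Set.univ, KSEPtoWKL, psnd, ?_, psnd_continuousOn _, ?_⟩
  · apply baire_continuousOn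
    intro s _ m
    refine ⟨2 * m + 2, fun t _ h => ?_⟩
    have hlen : 2 * (decodeW m).length ≤ 2 * m + 2 := by
      have := length_decodeW_le m; omega
    have hmono : ∀ i, i < 2 * (decodeW m).length → t i = s i :=
      fun i hi => h i (by omega)
    have hmono' : ∀ i, i < 2 * (decodeW m).length → s i = t i :=
      fun i hi => (hmono i hi).symm
    unfold KSEPtoWKL
    by_cases hc : sepCond s (decodeW m)
    · rw [if_pos (sepCond_mono hmono' hc), if_pos hc]
    · rw [if_neg (fun hh => hc (sepCond_mono hmono hh)), if_neg hc]
  · intro r hr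
    have hdisj : rangeM (pfst r) ∩ rangeM (psnd r) = ∅ := hr
    refine ⟨trivial, ⟨⟨?_, ?_⟩, ?_⟩, ?_⟩
    · intro n; unfold KSEPtoWKL; split <;> omega
    · -- prefix closed
      intro w v hpre h1
      rw [KSEPtoWKL_one_iff] at h1 ⊢
      obtain ⟨tl, htl⟩ := hpre
      subst htl
      intro j hj i hi
      have hgd : (w ++ tl).getD j false = w.getD j false := List.getD_append _ _ _ _ (by omega)
      have := h1 j (by simp; omega) i (by simp; omega)
      rw [hgd] at this
      exact this
    · -- infinite
      apply Set.infinite_of_injective_forall_mem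
        (f := fun k => prefixList (chi (rangeM (pfst r))) k)
      · intro a b hab
        have := congrArg List.length hab
        simpa [prefixList_length] using this
      · intro k
        simp only [Set.mem_setOf_eq]
        rw [KSEPtoWKL_one_iff]
        intro j hj i hi
        rw [prefixList_length] at hj hi
        rw [prefixList_getD _ _ _ hj]
        constructor
        · intro hp
          have : j ∈ rangeM (pfst r) := ⟨i, hp⟩
          simp [chi_eq_one_iff.mpr this]
        · intro hq
          have hjq : j ∈ rangeM (psnd r) := ⟨i, hq⟩
          have : j ∉ rangeM (pfst r) := by
            intro hjp
            have : j ∈ rangeM (pfst r) ∩ rangeM (psnd r) := ⟨hjp, hjq⟩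
            rw [hdisj] at this
            exact this
          simp [chi_eq_zero_iff.mpr this]
    · -- solutions
      rintro q ⟨hq1, hq2⟩
      refine ⟨trivial, ?_⟩
      rw [psnd_pairB]
      refine ⟨{n | q n = 1}, ?_, ?_, ?_⟩
      · funext n
        rw [chi_apply]
        simp only [Set.mem_setOf_eq]
        by_cases hn : q n = 1
        · rw [if_pos hn, hn]
        · rw [if_neg hn]
          have := hq1 n; omega
      · rintro n ⟨i, hi⟩
        have hc := (KSEPtoWKL_one_iff r _).mp (hq2 (max n i + 1))
        have h1 := (hc n (by rw [prefixList_length]; omega) i (by rw [prefixList_length]; omega)).1 hi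
        rw [prefixList_getD _ _ _ (by omega)] at h1
        simpa using h1
      · rintro n hn ⟨i, hi⟩
        have hc := (KSEPtoWKL_one_iff r _).mp (hq2 (max n i + 1))
        have h1 := (hc n (by rw [prefixList_length]; omega) i (by rw [prefixList_length]; omega)).2 hi
        rw [prefixList_getD _ _ _ (by omega)] at h1
        simp only [Set.mem_setOf_eq] at hn
        simp [hn] at h1

end RedSEPWKL
section RedWKLSEP

open Classical

def fSEP : List Bool → Baire → Bool := fun w q => decide (q (wordCode w) ≠ 0)

lemma fSEP_congr : ∀ (w : List Bool) (q q' : Baire),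
    (∀ i, i ≤ 2 ^ (w.length + 1) → q i = q' i) → fSEP w q = fSEP w q' := by
  intro w q q' h
  unfold fSEP
  have h1 := wordCode_le w
  have hle : wordCode w ≤ 2 ^ (w.length + 1) := le_trans h1 (Nat.sub_le _ _)
  rw [h _ hle]

noncomputable def cPdies (t : Baire) : ℕ → ℕ → Prop :=
  fun m k => diesAt t (decodeW m ++ [false]) k ∧ ¬ diesAt t (decodeW m ++ [true]) k

noncomputable def cQdies (t : Baire) : ℕ → ℕ → Prop :=
  fun m k => diesAt t (decodeW m ++ [true]) k ∧ ¬ diesAt t (decodeW m ++ [false]) k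

noncomputable def KWKLtoSEP (t : Baire) : Baire :=
  pairB (condEnum (cPdies t)) (condEnum (cQdies t))

lemma diesAt_congr' {t s : Baire} {w : List Bool} (b : Bool) {k : ℕ}
    (h : ∀ i, i < 2 ^ (w.length + k + 3) → t i = s i) :
    diesAt t (w ++ [b]) k ↔ diesAt s (w ++ [b]) k := by
  apply diesAt_congr
  intro i hi
  apply h
  have he : (w ++ [b]).length + k + 2 = w.length + k + 3 := by
    simp [List.length_append]; omega
  rwa [he] at hi

lemma wred_WKL_SEP : WRed WKL SEP := by
  refine ⟨Set.univ, Set.univ, KWKLtoSEP, fun r => pathOut fSEP (psnd r), ?_, ?_, ?_⟩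
  · -- continuity of K
    apply baire_continuousOn
    intro s _ j
    refine ⟨2 ^ ((decodeW (j / 2).unpair.1).length + (j / 2).unpair.2 + 3),
      fun t _ h => ?_⟩
    set m := (j / 2).unpair.1 with hm
    set k := (j / 2).unpair.2 with hk
    have i1 := diesAt_congr' (t := t) (s := s) (w := decodeW m) false (k := k) h
    have i2 := diesAt_congr' (t := t) (s := s) (w := decodeW m) true (k := k) h
    unfold KWKLtoSEP pairB condEnum cPdies cQdies
    by_cases hp : j % 2 = 0
    · rw [if_pos hp, if_pos hp]
      by_cases hc : diesAt s (decodeW m ++ [false]) k ∧ ¬ diesAt s (decodeW m ++ [true]) k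
      · rw [if_pos ⟨i1.mpr hc.1, fun hh => hc.2 (i2.mp hh)⟩, if_pos hc]
      · rw [if_neg (fun hh => hc ⟨i1.mp hh.1, fun h2 => hh.2 (i2.mpr h2)⟩), if_neg hc]
    · rw [if_neg hp, if_neg hp]
      by_cases hc : diesAt s (decodeW m ++ [true]) k ∧ ¬ diesAt s (decodeW m ++ [false]) k
      · rw [if_pos ⟨i2.mpr hc.1, fun hh => hc.2 (i1.mp hh)⟩, if_pos hc]
      · rw [if_neg (fun hh => hc ⟨i2.mp hh.1, fun h2 => hh.2 (i1.mpr h2)⟩), if_neg hc]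
  · -- continuity of H
    apply baire_continuousOn
    intro s _ n
    refine ⟨2 * ((Finset.range (n + 1)).sup (fun m => 2 ^ (m + 1))) + 2, fun r _ h => ?_⟩
    apply pathOut_congr (M := fun n => 2 ^ (n + 1)) fSEP_congr
    intro i hi
    show r (2 * i + 1) = s (2 * i + 1)
    apply h
    omega
  · rintro t ⟨ht, hinf⟩
    have hP : rangeM (pfst (KWKLtoSEP t)) = {m | ∃ k, cPdies t m k} := by
      unfold KWKLtoSEP
      rw [pfst_pairB]
      exact rangeM_condEnum _
    have hQ : rangeM (psnd (KWKLtoSEP t)) = {m | ∃ k, cQdies t m k} := by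
      unfold KWKLtoSEP
      rw [psnd_pairB]
      exact rangeM_condEnum _
    refine ⟨trivial, ?_, ?_⟩
    · -- disjointness
      show rangeM (pfst (KWKLtoSEP t)) ∩ rangeM (psnd (KWKLtoSEP t)) = ∅
      rw [hP, hQ, Set.eq_empty_iff_forall_notMem]
      rintro m ⟨⟨k, d0, a1⟩, ⟨k', d1, a0⟩⟩
      rcases le_total k k' with hkk | hkk
      · exact a0 (diesAt_mono ht d0 hkk)
      · exact a1 (diesAt_mono ht d1 hkk)
    · rintro s ⟨A, hsA, hPA, hAQ⟩
      rw [hP] at hPA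
      rw [hQ] at hAQ
      refine ⟨trivial, ?_⟩
      have hps : psnd (pairB t s) = s := psnd_pairB t s
      have hinv : ∀ n, aliveF t (pathGen fSEP s n) := by
        apply pathGen_invariant (aliveF t) (aliveF_nil ht hinf)
        intro w hw
        by_cases h0 : aliveF t (w ++ [false])
        · by_cases h1 : aliveF t (w ++ [true])
          · cases hb : fSEP w s
            · exact h0
            · exact h1
          · -- right subtree dies, separator must say 0
            obtain ⟨k, hk⟩ := (not_aliveF_iff ht.1 _).mp h1
            have hmQ : wordCode w ∈ {m | ∃ k, cQdies t m k} := by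
              refine ⟨k, ?_⟩
              unfold cQdies
              rw [decodeW_wordCode]
              exact ⟨hk, aliveF_not_diesAt h0 k⟩
            have hnA : wordCode w ∉ A := fun hc => hAQ hc hmQ
            have hs0 : s (wordCode w) = 0 := by
              rw [hsA]; exact chi_eq_zero_iff.mpr hnA
            have hb : fSEP w s = false := by
              unfold fSEP
              simp [hs0]
            rw [hb]; exact h0
        · have h1 : aliveF t (w ++ [true]) := (aliveF_child ht hw).resolve_left h0
          obtain ⟨k, hk⟩ := (not_aliveF_iff ht.1 _).mp h0
          have hmP : wordCode w ∈ {m | ∃ k, cPdies t m k} := by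
            refine ⟨k, ?_⟩
            unfold cPdies
            rw [decodeW_wordCode]
            exact ⟨hk, aliveF_not_diesAt h1 k⟩
          have hs1 : s (wordCode w) = 1 := by
            rw [hsA]; exact chi_eq_one_iff.mpr (hPA hmP)
          have hb : fSEP w s = true := by
            unfold fSEP
            simp [hs1]
          rw [hb]; exact h1
      show pathOut fSEP (psnd (pairB t s)) ∈ WKL.sol t
      rw [hps]
      exact ⟨fun n => pathOut_le_one _ _ _,
        fun k => by rw [prefixList_pathOut]; exact aliveF_mem (hinv k)⟩

end RedWKLSEP

/-- `SEP ≡_W WKL ≤_W EC ≡_W lim`. -/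
theorem SEP_WKL_EC_lim : WEquiv SEP WKL ∧ WRed WKL EC ∧ WEquiv EC limP :=
  ⟨⟨wred_SEP_WKL, wred_WKL_SEP⟩, wred_WKL_EC, ⟨wred_EC_limP, wred_limP_EC⟩⟩
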